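/- arXiv:2509.25005 — 8 statements merged into one kernel-verified Lean document; each statement's English description precedes it below -/
import Mathlib

section
/- If L is a countable linear order colored by a countable set A such that L is dense without endpoints and every color class is dense, then the ordered sum L + L (with colors inherited from each summand) is isomorphic to L via a color-preserving order isomorphism. -/
noncomputable section

namespace ColorBackForth

variable {α β A : Type*} [LinearOrder α] [LinearOrder β]

/-- Colored partial isomorphisms. -/
def CPI (cα : α → A) (cβ : β → A) : Type _ :=
  { f : Finset (α × β) //
    (∀ p ∈ f, ∀ q ∈ f, cmp (Prod.fst p) (Prod.fst q) = cmp (Prod.snd p) (Prod.snd q)) ∧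
    ∀ p ∈ f, cβ (Prod.snd p) = cα (Prod.fst p) }

variable {cα : α → A} {cβ : β → A}

instance : Inhabited (CPI cα cβ) :=
  ⟨⟨∅, fun _ h => absurd h (Finset.notMem_empty _),
      fun _ h => absurd h (Finset.notMem_empty _)⟩⟩

instance : Preorder (CPI cα cβ) := Subtype.preorder _

/-- Colored version of `Order.exists_between_finsets`. -/
theorem exists_between_color [Nonempty β]
    (hd : ∀ (a : A) (x y : β), x < y → ∃ z, x < z ∧ z < y ∧ cβ z = a)
    (hu : ∀ (a : A) (x : β), ∃ z, x < z ∧ cβ z = a)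
    (hl : ∀ (a : A) (x : β), ∃ z, z < x ∧ cβ z = a)
    (a : A) (lo hi : Finset β) (lo_lt_hi : ∀ x ∈ lo, ∀ y ∈ hi, x < y) :
    ∃ m : β, cβ m = a ∧ (∀ x ∈ lo, x < m) ∧ ∀ y ∈ hi, m < y := by
  rcases lo.eq_empty_or_nonempty with rfl | nlo
  · rcases hi.eq_empty_or_nonempty with rfl | nhi
    · obtain ⟨x⟩ := ‹Nonempty β›
      obtain ⟨z, _, hz⟩ := hu a x
      exact ⟨z, hz, by simp, by simp⟩
    · obtain ⟨z, hz1, hz2⟩ := hl a (hi.min' nhi)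
      exact ⟨z, hz2, by simp, fun y hy => hz1.trans_le (hi.min'_le y hy)⟩
  · rcases hi.eq_empty_or_nonempty with rfl | nhi
    · obtain ⟨z, hz1, hz2⟩ := hu a (lo.max' nlo)
      exact ⟨z, hz2, fun x hx => (lo.le_max' x hx).trans_lt hz1, by simp⟩
    · obtain ⟨z, hz1, hz2, hz3⟩ := hd a _ _ (lo_lt_hi _ (lo.max'_mem nlo) _ (hi.min'_mem nhi))
      exact ⟨z, hz3, fun x hx => (lo.le_max' x hx).trans_lt hz1,
        fun y hy => hz2.trans_le (hi.min'_le y hy)⟩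

/-- Colored version of `Order.PartialIso.exists_across`. -/
theorem exists_across [Nonempty β]
    (hd : ∀ (a : A) (x y : β), x < y → ∃ z, x < z ∧ z < y ∧ cβ z = a)
    (hu : ∀ (a : A) (x : β), ∃ z, x < z ∧ cβ z = a)
    (hl : ∀ (a : A) (x : β), ∃ z, z < x ∧ cβ z = a)
    (f : CPI cα cβ) (a : α) :
    ∃ b : β, cβ b = cα a ∧ ∀ p ∈ f.val, cmp (Prod.fst p) a = cmp (Prod.snd p) b := by
  by_cases h : ∃ b, (a, b) ∈ f.val
  · obtain ⟨b, hb⟩ := h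
    exact ⟨b, f.prop.2 _ hb, fun p hp => f.prop.1 _ hp _ hb⟩
  have key :
      ∀ x ∈ (f.val.filter fun p : α × β => p.fst < a).image Prod.snd,
        ∀ y ∈ (f.val.filter fun p : α × β => a < p.fst).image Prod.snd, x < y := by
    intro x hx y hy
    rw [Finset.mem_image] at hx hy
    rcases hx with ⟨p, hp1, rfl⟩
    rcases hy with ⟨q, hq1, rfl⟩
    rw [Finset.mem_filter] at hp1 hq1
    rw [← lt_iff_lt_of_cmp_eq_cmp (f.prop.1 _ hp1.1 _ hq1.1)]
    exact lt_trans hp1.right hq1.right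
  obtain ⟨b, hcb, hb, hb'⟩ := exists_between_color hd hu hl (cα a) _ _ key
  refine ⟨b, hcb, ?_⟩
  rintro ⟨p1, p2⟩ hp
  have hne : p1 ≠ a := fun he => h ⟨p2, he ▸ hp⟩
  rcases lt_or_gt_of_ne hne with hlt | hgt
  · have h2 : p1 < a ∧ p2 < b :=
      ⟨hlt, hb _ (Finset.mem_image.mpr ⟨(p1, p2), Finset.mem_filter.mpr ⟨hp, hlt⟩, rfl⟩)⟩
    rw [← cmp_eq_lt_iff, ← cmp_eq_lt_iff] at h2
    exact h2.1.trans h2.2.symm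
  · have h2 : a < p1 ∧ b < p2 :=
      ⟨hgt, hb' _ (Finset.mem_image.mpr ⟨(p1, p2), Finset.mem_filter.mpr ⟨hp, hgt⟩, rfl⟩)⟩
    rw [← cmp_eq_gt_iff, ← cmp_eq_gt_iff] at h2
    exact h2.1.trans h2.2.symm

/-- Reversed direction of `exists_across`. -/
theorem exists_across' [Nonempty α]
    (hd : ∀ (a : A) (x y : α), x < y → ∃ z, x < z ∧ z < y ∧ cα z = a)
    (hu : ∀ (a : A) (x : α), ∃ z, x < z ∧ cα z = a)
    (hl : ∀ (a : A) (x : α), ∃ z, z < x ∧ cα z = a)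
    (f : CPI cα cβ) (b : β) :
    ∃ a : α, cα a = cβ b ∧ ∀ p ∈ f.val, cmp (Prod.snd p) b = cmp (Prod.fst p) a := by
  by_cases h : ∃ a, (a, b) ∈ f.val
  · obtain ⟨a, ha⟩ := h
    exact ⟨a, (f.prop.2 _ ha).symm, fun p hp => (f.prop.1 _ hp _ ha).symm⟩
  have key :
      ∀ x ∈ (f.val.filter fun p : α × β => p.snd < b).image Prod.fst,
        ∀ y ∈ (f.val.filter fun p : α × β => b < p.snd).image Prod.fst, x < y := by
    intro x hx y hy
    rw [Finset.mem_image] at hx hy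
    rcases hx with ⟨p, hp1, rfl⟩
    rcases hy with ⟨q, hq1, rfl⟩
    rw [Finset.mem_filter] at hp1 hq1
    rw [lt_iff_lt_of_cmp_eq_cmp (f.prop.1 _ hp1.1 _ hq1.1)]
    exact lt_trans hp1.right hq1.right
  obtain ⟨a, hca, ha, ha'⟩ := exists_between_color hd hu hl (cβ b) _ _ key
  refine ⟨a, hca, ?_⟩
  rintro ⟨p1, p2⟩ hp
  have hne : p2 ≠ b := fun he => h ⟨p1, he ▸ hp⟩
  rcases lt_or_gt_of_ne hne with hlt | hgt
  · have h2 : p2 < b ∧ p1 < a :=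
      ⟨hlt, ha _ (Finset.mem_image.mpr ⟨(p1, p2), Finset.mem_filter.mpr ⟨hp, hlt⟩, rfl⟩)⟩
    rw [← cmp_eq_lt_iff, ← cmp_eq_lt_iff] at h2
    exact h2.1.trans h2.2.symm
  · have h2 : b < p2 ∧ a < p1 :=
      ⟨hgt, ha' _ (Finset.mem_image.mpr ⟨(p1, p2), Finset.mem_filter.mpr ⟨hp, hgt⟩, rfl⟩)⟩
    rw [← cmp_eq_gt_iff, ← cmp_eq_gt_iff] at h2
    exact h2.1.trans h2.2.symm

/-- Cofinal set of partial isos defined at `a : α`. -/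
def definedAtLeft [Nonempty β]
    (hd : ∀ (a : A) (x y : β), x < y → ∃ z, x < z ∧ z < y ∧ cβ z = a)
    (hu : ∀ (a : A) (x : β), ∃ z, x < z ∧ cβ z = a)
    (hl : ∀ (a : A) (x : β), ∃ z, z < x ∧ cβ z = a)
    (a : α) : Order.Cofinal (CPI cα cβ) where
  carrier := {f | ∃ b : β, (a, b) ∈ f.val}
  isCofinal f := by
    obtain ⟨b, hcb, a_b⟩ := exists_across hd hu hl f a
    refine ⟨⟨insert (a, b) f.val, fun p hp q hq => ?_, fun p hp => ?_⟩,
      ⟨b, Finset.mem_insert_self _ _⟩, Finset.subset_insert _ _⟩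
    · rw [Finset.mem_insert] at hp hq
      rcases hp with (rfl | pf) <;> rcases hq with (rfl | qf)
      · simp only [cmp_self_eq_eq]
      · rw [cmp_eq_cmp_symm]; exact a_b _ qf
      · exact a_b _ pf
      · exact f.prop.1 _ pf _ qf
    · rw [Finset.mem_insert] at hp
      rcases hp with rfl | pf
      · exact hcb
      · exact f.prop.2 _ pf

/-- Cofinal set of partial isos defined at `b : β`. -/
def definedAtRight [Nonempty α]
    (hd : ∀ (a : A) (x y : α), x < y → ∃ z, x < z ∧ z < y ∧ cα z = a)
    (hu : ∀ (a : A) (x : α), ∃ z, x < z ∧ cα z = a)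
    (hl : ∀ (a : A) (x : α), ∃ z, z < x ∧ cα z = a)
    (b : β) : Order.Cofinal (CPI cα cβ) where
  carrier := {f | ∃ a : α, (a, b) ∈ f.val}
  isCofinal f := by
    obtain ⟨a, hca, a_b⟩ := exists_across' hd hu hl f b
    refine ⟨⟨insert (a, b) f.val, fun p hp q hq => ?_, fun p hp => ?_⟩,
      ⟨a, Finset.mem_insert_self _ _⟩, Finset.subset_insert _ _⟩
    · rw [Finset.mem_insert] at hp hq
      rcases hp with (rfl | pf) <;> rcases hq with (rfl | qf)
      · simp only [cmp_self_eq_eq]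
      · rw [cmp_eq_cmp_symm]; exact (a_b _ qf).symm
      · exact (a_b _ pf).symm
      · exact f.prop.1 _ pf _ qf
    · rw [Finset.mem_insert] at hp
      rcases hp with rfl | pf
      · exact hca.symm
      · exact f.prop.2 _ pf

/-- Colored back-and-forth theorem. -/
theorem exists_color_iso [Countable α] [Countable β] [Nonempty α] [Nonempty β]
    (hdα : ∀ (a : A) (x y : α), x < y → ∃ z, x < z ∧ z < y ∧ cα z = a)
    (huα : ∀ (a : A) (x : α), ∃ z, x < z ∧ cα z = a)
    (hlα : ∀ (a : A) (x : α), ∃ z, z < x ∧ cα z = a)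
    (hdβ : ∀ (a : A) (x y : β), x < y → ∃ z, x < z ∧ z < y ∧ cβ z = a)
    (huβ : ∀ (a : A) (x : β), ∃ z, x < z ∧ cβ z = a)
    (hlβ : ∀ (a : A) (x : β), ∃ z, z < x ∧ cβ z = a) :
    ∃ e : α ≃o β, ∀ a : α, cβ (e a) = cα a := by
  cases nonempty_encodable α
  cases nonempty_encodable β
  let to_cofinal : α ⊕ β → Order.Cofinal (CPI cα cβ) := fun p =>
    Sum.recOn p (definedAtLeft hdβ huβ hlβ) (definedAtRight hdα huα hlα)
  let our_ideal : Order.Ideal (CPI cα cβ) := Order.idealOfCofinals default to_cofinal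
  have hF : ∀ a : α, ∃ b : β, ∃ f ∈ our_ideal, (a, b) ∈ f.val := by
    intro a
    obtain ⟨f, ⟨b, hb⟩, hf⟩ := Order.cofinal_meets_idealOfCofinals default to_cofinal (Sum.inl a)
    exact ⟨b, f, hf, hb⟩
  have hG : ∀ b : β, ∃ a : α, ∃ f ∈ our_ideal, (a, b) ∈ f.val := by
    intro b
    obtain ⟨f, ⟨a, ha⟩, hf⟩ := Order.cofinal_meets_idealOfCofinals default to_cofinal (Sum.inr b)
    exact ⟨a, f, hf, ha⟩
  choose F hF using hF
  choose G hG using hG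
  have cmp_key : ∀ (a : α) (b : β), cmp a (G b) = cmp (F a) b := by
    intro a b
    obtain ⟨f, hf, ha⟩ := hF a
    obtain ⟨g, hg, hb⟩ := hG b
    obtain ⟨m, _, fm, gm⟩ := our_ideal.directed _ hf _ hg
    exact m.prop.1 (a, _) (fm ha) (_, b) (gm hb)
  refine ⟨OrderIso.ofCmpEqCmp F G cmp_key, fun a => ?_⟩
  obtain ⟨f, _, ha⟩ := hF a
  exact f.prop.2 _ ha

end ColorBackForth

end

/-- The absorption law `Sh(A) + Sh(A) ≅ Sh(A)`: for a countable dense linear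
order without endpoints colored by a countable set with every color class dense,
the lexicographic sum `L + L` is isomorphic to `L` via a color-preserving
order isomorphism. -/
theorem colorShuffle_add_self {α A : Type*} [LinearOrder α] [Countable α] [Countable A]
    [Nonempty α] [DenselyOrdered α] [NoMinOrder α] [NoMaxOrder α]
    (c : α → A)
    (hd : ∀ (a : A) (x y : α), x < y → ∃ z, x < z ∧ z < y ∧ c z = a)
    (hu : ∀ (a : A) (x : α), ∃ z, x < z ∧ c z = a)
    (hl : ∀ (a : A) (x : α), ∃ z, z < x ∧ c z = a) :
    ∃ e : (α ⊕ₗ α) ≃o α, ∀ x : α ⊕ₗ α, c (e x) = Sum.elim c c (ofLex x) := by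
  haveI : Countable (α ⊕ₗ α) := (inferInstance : Countable (α ⊕ α))
  haveI : Nonempty (α ⊕ₗ α) := (inferInstance : Nonempty (α ⊕ α))
  set cL : α ⊕ₗ α → A := fun x => Sum.elim c c (ofLex x) with hcL
  have hdL : ∀ (a : A) (x y : α ⊕ₗ α), x < y → ∃ z, x < z ∧ z < y ∧ cL z = a := by
    intro a x y hxy
    rcases x with x | x <;> rcases y with y | y
    · obtain ⟨z, h1, h2, h3⟩ := hd a x y (Sum.Lex.inl_lt_inl_iff.mp hxy)
      exact ⟨toLex (Sum.inl z), Sum.Lex.inl_lt_inl_iff.mpr h1, Sum.Lex.inl_lt_inl_iff.mpr h2, h3⟩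
    · obtain ⟨z, h1, h3⟩ := hu a x
      exact ⟨toLex (Sum.inl z), Sum.Lex.inl_lt_inl_iff.mpr h1, Sum.Lex.inl_lt_inr _ _, h3⟩
    · exact (Sum.Lex.not_inr_lt_inl hxy).elim
    · obtain ⟨z, h1, h2, h3⟩ := hd a x y (Sum.Lex.inr_lt_inr_iff.mp hxy)
      exact ⟨toLex (Sum.inr z), Sum.Lex.inr_lt_inr_iff.mpr h1, Sum.Lex.inr_lt_inr_iff.mpr h2, h3⟩
  have huL : ∀ (a : A) (x : α ⊕ₗ α), ∃ z, x < z ∧ cL z = a := by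
    intro a x
    obtain ⟨x0⟩ := ‹Nonempty α›
    rcases x with x | x
    · obtain ⟨z, h1, h3⟩ := hu a x
      exact ⟨toLex (Sum.inl z), Sum.Lex.inl_lt_inl_iff.mpr h1, h3⟩
    · obtain ⟨z, h1, h3⟩ := hu a x
      exact ⟨toLex (Sum.inr z), Sum.Lex.inr_lt_inr_iff.mpr h1, h3⟩
  have hlL : ∀ (a : A) (x : α ⊕ₗ α), ∃ z, z < x ∧ cL z = a := by
    intro a x
    rcases x with x | x
    · obtain ⟨z, h1, h3⟩ := hl a x
      exact ⟨toLex (Sum.inl z), Sum.Lex.inl_lt_inl_iff.mpr h1, h3⟩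
    · obtain ⟨z, h1, h3⟩ := hl a x
      exact ⟨toLex (Sum.inr z), Sum.Lex.inr_lt_inr_iff.mpr h1, h3⟩
  obtain ⟨e, he⟩ := ColorBackForth.exists_color_iso (cα := cL) (cβ := c) hdL huL hlL hd hu hl
  exact ⟨e, he⟩
end

section
/- Every infinite block of a linear order is order-isomorphic to ω, ω*, or ζ, where ω is the natural numbers, ω* is the negative integers (ω reversed), and ζ is the integers. -/
/-- `x` and `y` are finitely far apart: the closed interval between them is finite. -/
def FinFar {α : Type*} [LinearOrder α] (x y : α) : Prop :=
  (Set.Icc (min x y) (max x y)).Finite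

lemma finFar_icc_finite {α : Type*} [LinearOrder α] {x a b : α}
    (ha : FinFar x a) (hb : FinFar x b) : (Set.Icc a b).Finite := by
  apply Set.Finite.subset (ha.union hb)
  intro z hz
  rcases le_total z x with hzx | hxz
  · exact Or.inl ⟨le_trans (min_le_right x a) hz.1, le_trans hzx (le_max_left x a)⟩
  · exact Or.inr ⟨le_trans (min_le_left x b) hxz, le_trans hz.2 (le_max_right x b)⟩

/-- Every infinite block of a linear order is order-isomorphic to `ω` (= ℕ),
`ω*` (= ℕ with the reversed order), or `ζ` (= ℤ). -/
theorem infinite_block_type {α : Type*} [LinearOrder α] (x : α)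
    (h : {y | FinFar x y}.Infinite) :
    Nonempty ({y // FinFar x y} ≃o ℕ) ∨
    Nonempty ({y // FinFar x y} ≃o ℕᵒᵈ) ∨
    Nonempty ({y // FinFar x y} ≃o ℤ) := by
  set B := {y // FinFar x y} with hB
  haveI : Infinite B := h.to_subtype
  haveI : Nonempty B := ⟨⟨x, by simp [FinFar]⟩⟩
  haveI : LocallyFiniteOrder B := by
    refine LocallyFiniteOrder.ofFiniteIcc (fun a b => ?_)
    have : (Set.Icc a b : Set B) = Subtype.val ⁻¹' Set.Icc (a : α) (b : α) := by
      ext z; simp [Set.mem_Icc, Subtype.coe_le_coe]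
    rw [this]
    exact Set.Finite.preimage Subtype.val_injective.injOn (finFar_icc_finite a.2 b.2)
  letI : SuccOrder B := LinearLocallyFiniteOrder.succOrder B
  letI : PredOrder B := LinearLocallyFiniteOrder.predOrder B
  by_cases hbot : ∃ b : B, ∀ y, b ≤ y
  · obtain ⟨b, hb⟩ := hbot
    by_cases htop : ∃ t : B, ∀ y, y ≤ t
    · obtain ⟨t, ht⟩ := htop
      have hfin : (Set.univ : Set B).Finite :=
        (Set.finite_Icc b t).subset (fun z _ => ⟨hb z, ht z⟩)
      exact absurd hfin (Set.infinite_univ (α := B))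
    · haveI : OrderBot B := { bot := b, bot_le := hb }
      haveI : NoMaxOrder B := ⟨fun a => by
        push_neg at htop
        obtain ⟨y, hy⟩ := htop a
        exact ⟨y, not_le.mp hy⟩⟩
      exact Or.inl ⟨orderIsoNatOfLinearSuccPredArch⟩
  · by_cases htop : ∃ t : B, ∀ y, y ≤ t
    · obtain ⟨t, ht⟩ := htop
      haveI : OrderBot Bᵒᵈ := { bot := OrderDual.toDual t, bot_le := fun y => ht (OrderDual.ofDual y) }
      haveI : NoMaxOrder Bᵒᵈ := ⟨fun a => by
        push_neg at hbot
        obtain ⟨y, hy⟩ := hbot (OrderDual.ofDual a)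
        exact ⟨OrderDual.toDual y, not_le.mp hy⟩⟩
      exact Or.inr (Or.inl ⟨(orderIsoNatOfLinearSuccPredArch (ι := Bᵒᵈ)).dual⟩)
    · push_neg at hbot htop
      haveI : NoMinOrder B := ⟨fun a => by
        obtain ⟨y, hy⟩ := hbot a
        exact ⟨y, not_le.mp hy⟩⟩
      haveI : NoMaxOrder B := ⟨fun a => by
        obtain ⟨y, hy⟩ := htop a
        exact ⟨y, not_le.mp hy⟩⟩
      exact Or.inr (Or.inr ⟨orderIsoIntOfLinearSuccPredArch⟩)
end

section
/- Let a : ℕ → ℕ be defined by a(0) = 1 and a(n+1) = Σ_{i=1}^{n+1} C(n+1, i) · a(n+1-i). Then the exponential generating function f(X) = Σ_k a(k) X^k / k! satisfies the formal power series identity (2 - exp(X)) · f(X) = 1. -/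
/-- If `a 0 = 1` and `a (n+1) = Σ_{i=1}^{n+1} C(n+1,i) a(n+1-i)` (the Fubini
numbers counting ordered set partitions), then the exponential generating
function `f` of `a` satisfies `(2 - exp X) * f = 1` in `ℚ[[X]]`. -/
theorem fubini_egf (a : ℕ → ℕ) (ha0 : a 0 = 1)
    (ha : ∀ n, a (n + 1) = ∑ i ∈ Finset.Icc 1 (n + 1), (n + 1).choose i * a (n + 1 - i)) :
    (2 - PowerSeries.exp ℚ) *
      PowerSeries.mk (fun k => (a k : ℚ) / (Nat.factorial k : ℚ)) = 1 := by
  have h2 : (2 : PowerSeries ℚ) = PowerSeries.C (R := ℚ) 2 := (map_ofNat (PowerSeries.C (R := ℚ)) 2).symm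
  ext n
  rw [sub_mul, map_sub, h2, PowerSeries.coeff_C_mul]
  cases n with
  | zero =>
    simp [PowerSeries.coeff_zero_eq_constantCoeff, ha0]
    norm_num
  | succ n =>
    rw [PowerSeries.coeff_mul]
    simp only [PowerSeries.coeff_mk, PowerSeries.coeff_exp, PowerSeries.coeff_one,
      Nat.succ_ne_zero, if_false, Algebra.algebraMap_self, RingHom.id_apply]
    rw [Finset.Nat.sum_antidiagonal_eq_sum_range_succ_mk]
    rw [Finset.sum_range_succ']
    simp only [Nat.sub_zero, Nat.factorial_zero, Nat.cast_one, div_one, one_mul]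
    -- goal: 2 * (a (n+1)/(Nat.factorial (n+1))) - (∑ i in range (n+1), 1/(Nat.factorial (i+1)) * (a (n+1-(i+1))/(Nat.factorial (n+1-(i+1)))) + a (n+1)/(Nat.factorial (n+1))) = 0
    have key : (a (n+1) : ℚ) / (Nat.factorial (n+1)) =
        ∑ i ∈ Finset.range (n+1), (1 / ((Nat.factorial (i+1)) : ℚ)) * ((a (n+1-(i+1)) : ℚ) / ((Nat.factorial (n+1-(i+1))) : ℚ)) := by
      rw [ha n, ← Finset.Ico_add_one_right_eq_Icc, Finset.sum_Ico_eq_sum_range]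
      push_cast
      rw [Finset.sum_div]
      refine Finset.sum_congr rfl fun i hi => ?_
      simp only [Finset.mem_range] at hi
      have h1 : 1 + i ≤ n + 1 := by omega
      rw [Nat.cast_choose ℚ h1]
      have hi1 : n + 1 - (1 + i) = n - i := by omega
      rw [hi1, add_comm 1 i]
      have f1 : ((Nat.factorial (i+1)) : ℚ) ≠ 0 := Nat.cast_ne_zero.2 (Nat.factorial_ne_zero _)
      have f2 : ((Nat.factorial (n-i)) : ℚ) ≠ 0 := Nat.cast_ne_zero.2 (Nat.factorial_ne_zero _)
      have f3 : ((Nat.factorial (n+1)) : ℚ) ≠ 0 := Nat.cast_ne_zero.2 (Nat.factorial_ne_zero _)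
      field_simp
    rw [key]
    ring
end

section
/- Let J : ℕ → ℕ be defined by J(0) = 1 and J(k+1) = 2(k+1)·J(k) + Σ_{i=2}^{k+1} C(k+1, i) · J(k+1-i). Then the exponential generating function f(X) = Σ_k J(k) X^k / k! satisfies the formal power series identity (2 - X - exp(X)) · f(X) = 1. -/
open PowerSeries Finset

/-- If `J 0 = 1` and `J (k+1) = 2(k+1) J(k) + Σ_{i=2}^{k+1} C(k+1,i) J(k+1-i)`,
then the exponential generating function `f` of `J` satisfies
`(2 - X - exp X) * f = 1` in `ℚ[[X]]`. -/
theorem homogColored_egf (J : ℕ → ℕ) (hJ0 : J 0 = 1)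
    (hJ : ∀ k, J (k + 1) =
      2 * (k + 1) * J k + ∑ i ∈ Finset.Icc 2 (k + 1), (k + 1).choose i * J (k + 1 - i)) :
    (2 - PowerSeries.X - PowerSeries.exp ℚ) *
      PowerSeries.mk (fun k => (J k : ℚ) / (Nat.factorial k : ℚ)) = 1 := by
  have key : ∀ k : ℕ, (J (k+1) : ℚ) / (k+1).factorial
      = 2 * (J k : ℚ) / k.factorial
        + ∑ j ∈ range k, (J (k - 1 - j) : ℚ) / ((j+2).factorial * (k - 1 - j).factorial) := by
    intro k
    rw [hJ k]
    push_cast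
    rw [← Finset.Ico_add_one_right_eq_Icc, Finset.sum_Ico_eq_sum_range]
    have hkk : k + 1 + 1 - 2 = k := by omega
    rw [hkk, add_div, Finset.sum_div]
    congr 1
    · rw [Nat.factorial_succ]
      push_cast
      have : (k.factorial : ℚ) ≠ 0 := Nat.cast_ne_zero.mpr k.factorial_ne_zero
      field_simp
    · apply Finset.sum_congr rfl
      intro j hj
      simp only [Finset.mem_range] at hj
      have h1 : 2 + j ≤ k + 1 := by omega
      have h2 : k + 1 - (2 + j) = k - 1 - j := by omega
      have hc := Nat.choose_mul_factorial_mul_factorial h1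
      rw [h2] at hc
      have hne : ((2+j).factorial : ℚ) ≠ 0 := Nat.cast_ne_zero.mpr (Nat.factorial_ne_zero _)
      have hne2 : ((k-1-j).factorial : ℚ) ≠ 0 := Nat.cast_ne_zero.mpr (Nat.factorial_ne_zero _)
      have hne3 : ((k+1).factorial : ℚ) ≠ 0 := Nat.cast_ne_zero.mpr (Nat.factorial_ne_zero _)
      have hcQ : ((k+1).choose (2+j) : ℚ) * (2+j).factorial * (k-1-j).factorial
          = (k+1).factorial := by exact_mod_cast congrArg (Nat.cast : ℕ → ℚ) hc
      have h3 : j + 2 = 2 + j := by omega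
      rw [h2, h3]
      field_simp
      linear_combination ((J (k-1-j) : ℚ)) * hcQ
  ext n
  rw [sub_mul, sub_mul, map_sub, map_sub, PowerSeries.coeff_mul (φ := exp ℚ),
    Finset.Nat.sum_antidiagonal_eq_sum_range_succ_mk]
  simp only [coeff_exp, coeff_mk, eq_ratCast, Rat.cast_eq_id, id_eq]
  cases n with
  | zero =>
    simp [hJ0, map_ofNat]
    norm_num
  | succ k =>
    rw [coeff_succ_X_mul, coeff_mk, coeff_one]
    have h2 : (coeff (R := ℚ) (k+1)) (2 * mk fun k => (J k : ℚ) / k.factorial)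
        = 2 * ((J (k+1) : ℚ) / (k+1).factorial) := by
      rw [(map_ofNat (C (R := ℚ)) 2).symm, coeff_C_mul, coeff_mk]
    rw [h2]
    rw [Finset.sum_range_succ', Finset.sum_range_succ']
    have : ∀ j ∈ range k, (1 / ((j + 1 + 1).factorial : ℚ)) * ((J (k + 1 - (j + 1 + 1)) : ℚ) / (k + 1 - (j + 1 + 1)).factorial)
        = (J (k - 1 - j) : ℚ) / ((j+2).factorial * (k - 1 - j).factorial) := by
      intro j hj
      simp only [mem_range] at hj
      have : k + 1 - (j + 1 + 1) = k - 1 - j := by omega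
      rw [this]
      have h4 : j + 1 + 1 = j + 2 := by omega
      rw [h4]
      field_simp
    rw [Finset.sum_congr rfl this, if_neg (Nat.succ_ne_zero k)]
    simp only [Nat.sub_zero, Nat.add_sub_cancel, Nat.factorial_zero, Nat.factorial_one,
      Nat.cast_one, zero_add]
    linear_combination key k
end

section
/- Let J : ℕ → ℕ satisfy J(0) = 1 and J(k+1) = 2(k+1)·J(k) + Σ_{i=2}^{k+1} C(k+1, i) · J(k+1-i), and define L(k) = Σ_{i=1}^{k} C(k, i) · J(i) for k ≥ 1 together with L(0) = 1. Then the exponential generating function of L equals exp(X) · f(X), where f is the exponential generating function of J; equivalently, (2 - X - exp(X)) · (Σ_k L(k) X^k/k!) = exp(X) as formal power series. -/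
section Aux
open PowerSeries Finset

lemma coeff_exp_mul (J : ℕ → ℕ) (n : ℕ) :
    coeff n (exp ℚ * PowerSeries.mk (fun k => (J k : ℚ) / (Nat.factorial k : ℚ))) =
      (∑ i ∈ range (n+1), (n.choose i * J i : ℕ) : ℚ) / n.factorial := by
  rw [coeff_mul, Finset.Nat.sum_antidiagonal_eq_sum_range_succ_mk]
  push_cast
  rw [sum_div, ← Finset.sum_range_reflect]
  refine Finset.sum_congr rfl (fun i hi => ?_)
  rw [mem_range, Nat.lt_succ_iff] at hi
  rw [coeff_exp, coeff_mk]
  simp only [Nat.succ_sub_one, Nat.sub_sub_self hi, map_one, Algebra.algebraMap_self,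
    RingHom.id_apply]
  rw [Nat.cast_choose ℚ hi]
  have h0 : (n.factorial : ℚ) ≠ 0 := Nat.cast_ne_zero.mpr n.factorial_ne_zero
  have h1 : (i.factorial : ℚ) ≠ 0 := Nat.cast_ne_zero.mpr i.factorial_ne_zero
  have h2 : ((n-i).factorial : ℚ) ≠ 0 := Nat.cast_ne_zero.mpr (n-i).factorial_ne_zero
  field_simp

lemma key_nat (J : ℕ → ℕ)
    (hJ : ∀ k, J (k + 1) =
      2 * (k + 1) * J k + ∑ i ∈ Finset.Icc 2 (k + 1), (k + 1).choose i * J (k + 1 - i))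
    (k : ℕ) :
    2 * J (k+1) = (k+1) * J k + ∑ i ∈ range (k+2), (k+1).choose i * J i := by
  have hre : ∑ i ∈ Finset.Icc 2 (k + 1), (k + 1).choose i * J (k + 1 - i)
      = ∑ j ∈ range k, (k+1).choose j * J j := by
    refine Finset.sum_nbij' (fun i => k + 1 - i) (fun j => k + 1 - j) ?_ ?_ ?_ ?_ ?_
    · intro i hi; rw [Finset.mem_Icc] at hi; rw [mem_range]; omega
    · intro j hj; rw [mem_range] at hj; rw [Finset.mem_Icc]; omega
    · intro i hi; rw [Finset.mem_Icc] at hi; omega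
    · intro j hj; rw [mem_range] at hj; omega
    · intro i hi; rw [Finset.mem_Icc] at hi
      rw [Nat.choose_symm (by omega)]
  rw [Finset.sum_range_succ, Finset.sum_range_succ, Nat.choose_succ_self_right,
    Nat.choose_self, ← hre, hJ k]
  ring

lemma unit_lemma (J : ℕ → ℕ) (hJ0 : J 0 = 1)
    (hJ : ∀ k, J (k + 1) =
      2 * (k + 1) * J k + ∑ i ∈ Finset.Icc 2 (k + 1), (k + 1).choose i * J (k + 1 - i)) :
    (2 - PowerSeries.X - exp ℚ) *
      PowerSeries.mk (fun k => (J k : ℚ) / (Nat.factorial k : ℚ)) = 1 := by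
  set f := PowerSeries.mk (fun k => (J k : ℚ) / (Nat.factorial k : ℚ)) with hf
  have hexp : (2 - PowerSeries.X - exp ℚ) * f = (f + f) - PowerSeries.X * f - exp ℚ * f := by
    ring
  rw [hexp]
  ext n
  simp only [map_sub]
  rw [coeff_exp_mul]
  rcases n with _ | n
  · simp [hf, coeff_mk, hJ0, coeff_one]
  · rw [PowerSeries.coeff_succ_X_mul]
    have h2 : (coeff (n+1)) (f + f) = 2 * ((J (n+1) : ℚ) / (n+1).factorial) := by
      rw [map_add, hf, coeff_mk]; ring
    rw [h2, hf]
    simp only [coeff_mk, coeff_one]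
    have hkey := key_nat J hJ n
    have hcast : (∑ i ∈ range (n+2), ((n+1).choose i * J i : ℕ) : ℚ)
        = 2 * (J (n+1) : ℚ) - (n+1) * J n := by
      have := congrArg (fun x : ℕ => (x : ℚ)) hkey
      push_cast at this ⊢
      linarith
    rw [hcast]
    have h0 : ((n+1).factorial : ℚ) ≠ 0 := Nat.cast_ne_zero.mpr (n+1).factorial_ne_zero
    have h1 : (n.factorial : ℚ) ≠ 0 := Nat.cast_ne_zero.mpr n.factorial_ne_zero
    have hfac : ((n+1).factorial : ℚ) = (n+1) * n.factorial := by
      rw [Nat.factorial_succ]; push_cast; ring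
    simp only [Nat.succ_ne_zero, if_false]
    rw [hfac]
    field_simp
    ring

end Aux


/-- Binomial transform identity for EGFs: with `J` as before and
`L k = Σ_{i=0}^{k} C(k,i) J(i)` (the `i = 0` term `C(k,0)·J(0)` contributing `1`),
the exponential generating function of `L` is `exp X` times that of `J`;
equivalently `(2 - X - exp X) * EGF(L) = exp X` in `ℚ[[X]]`. -/
theorem homogColored_total_egf (J L : ℕ → ℕ) (hJ0 : J 0 = 1)
    (hJ : ∀ k, J (k + 1) =
      2 * (k + 1) * J k + ∑ i ∈ Finset.Icc 2 (k + 1), (k + 1).choose i * J (k + 1 - i))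
    (hL : ∀ k, L k = ∑ i ∈ Finset.range (k + 1), k.choose i * J i) :
    PowerSeries.mk (fun k => (L k : ℚ) / (Nat.factorial k : ℚ)) =
      PowerSeries.exp ℚ * PowerSeries.mk (fun k => (J k : ℚ) / (Nat.factorial k : ℚ)) ∧
    (2 - PowerSeries.X - PowerSeries.exp ℚ) *
      PowerSeries.mk (fun k => (L k : ℚ) / (Nat.factorial k : ℚ)) = PowerSeries.exp ℚ := by
  have h1 : PowerSeries.mk (fun k => (L k : ℚ) / (Nat.factorial k : ℚ)) =
      PowerSeries.exp ℚ * PowerSeries.mk (fun k => (J k : ℚ) / (Nat.factorial k : ℚ)) := by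
    ext n
    rw [PowerSeries.coeff_mk, coeff_exp_mul, hL n]
    push_cast
    ring
  refine ⟨h1, ?_⟩
  rw [h1, mul_left_comm, unit_lemma J hJ0 hJ, mul_one]
end

section
/- For each n ≥ 1, the linear order ℚ + n + ℚ (the rationals, followed by a finite chain of n elements, followed by the rationals) is weakly homogeneous: there is a finite set P of elements such that every order isomorphism between finite subsets that fixes P pointwise extends to an order automorphism. -/
/-- A linear order is weakly homogeneous if there is a finite exceptional set `P`
such that every order isomorphism between finite subsets containing `P` that
fixes `P` pointwise extends to an order automorphism. -/
def WeaklyHomogeneousLO (α : Type*) [LinearOrder α] : Prop :=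
  ∃ P : Finset α, ∀ (s t : Set α), s.Finite → t.Finite → ↑P ⊆ s →
    ∀ f : s ≃o t, (∀ (p : α) (hp : p ∈ s), p ∈ P → (f ⟨p, hp⟩ : α) = p) →
      ∃ g : α ≃o α, ∀ x : s, g x = (f x : α)

open Order Order.PartialIso in
/-- Any finite partial order iso of `ℚ` extends to an automorphism. -/
lemma exists_orderIso_extends (p : Order.PartialIso ℚ ℚ) :
    ∃ g : ℚ ≃o ℚ, ∀ ab ∈ p.val, g ab.1 = ab.2 := by
  classical
  let to_cofinal : ℚ ⊕ ℚ → Cofinal (PartialIso ℚ ℚ) := fun x =>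
    Sum.recOn x (definedAtLeft ℚ) (definedAtRight ℚ)
  let our_ideal : Ideal (PartialIso ℚ ℚ) := idealOfCofinals p to_cofinal
  let F := fun a => funOfIdeal a our_ideal (cofinal_meets_idealOfCofinals _ to_cofinal (Sum.inl a))
  let G := fun b => invOfIdeal b our_ideal (cofinal_meets_idealOfCofinals _ to_cofinal (Sum.inr b))
  refine ⟨OrderIso.ofCmpEqCmp (fun a => (F a).val) (fun b => (G b).val) ?_, ?_⟩
  · intro a b
    rcases (F a).prop with ⟨f, hf, ha⟩
    rcases (G b).prop with ⟨g, hg, hb⟩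
    rcases our_ideal.directed _ hf _ hg with ⟨m, _, fm, gm⟩
    exact m.prop (a, _) (fm ha) (_, b) (gm hb)
  · rintro ⟨a, b⟩ hab
    show (F a).val = b
    rcases (F a).prop with ⟨f, hf, ha⟩
    have hp : p ∈ our_ideal := mem_idealOfCofinals p to_cofinal
    rcases our_ideal.directed _ hf _ hp with ⟨m, _, fm, pm⟩
    have h := m.prop (a, (F a).val) (fm ha) (a, b) (pm hab)
    rw [cmp_self_eq_eq] at h
    exact ((cmp_eq_eq_iff _ _).1 h.symm)

/-- Componentwise order automorphism of a lexicographic sum. -/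
def sumLexCongrIso {α β : Type*} [LinearOrder α] [LinearOrder β]
    (e₁ : α ≃o α) (e₂ : β ≃o β) : (α ⊕ₗ β) ≃o (α ⊕ₗ β) :=
  { Equiv.sumCongr e₁.toEquiv e₂.toEquiv with
    map_rel_iff' := by
      rintro (q | q) (r | r)
      · show toLex (Sum.inl (e₁ q)) ≤ toLex (Sum.inl (e₁ r)) ↔
          toLex (Sum.inl q) ≤ toLex (Sum.inl r)
        rw [Sum.Lex.inl_le_inl_iff, Sum.Lex.inl_le_inl_iff]
        exact e₁.le_iff_le
      · exact iff_of_true (Sum.Lex.inl_le_inr _ _) (Sum.Lex.inl_le_inr _ _)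
      · exact iff_of_false Sum.Lex.not_inr_le_inl Sum.Lex.not_inr_le_inl
      · show toLex (Sum.inr (e₂ q)) ≤ toLex (Sum.inr (e₂ r)) ↔
          toLex (Sum.inr q) ≤ toLex (Sum.inr r)
        rw [Sum.Lex.inr_le_inr_iff, Sum.Lex.inr_le_inr_iff]
        exact e₂.le_iff_le }

lemma sumLexCongrIso_inl {α β : Type*} [LinearOrder α] [LinearOrder β]
    (e₁ : α ≃o α) (e₂ : β ≃o β) (q : α) :
    sumLexCongrIso e₁ e₂ (toLex (Sum.inl q)) = toLex (Sum.inl (e₁ q)) := rfl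

lemma sumLexCongrIso_inr {α β : Type*} [LinearOrder α] [LinearOrder β]
    (e₁ : α ≃o α) (e₂ : β ≃o β) (q : β) :
    sumLexCongrIso e₁ e₂ (toLex (Sum.inr q)) = toLex (Sum.inr (e₂ q)) := rfl

lemma cmp_congr' {α β : Type*} [LinearOrder α] [LinearOrder β] {a b : α} {a' b' : β}
    (h1 : a < b ↔ a' < b') (h2 : b < a ↔ b' < a') : cmp a b = cmp a' b' := by
  rcases lt_trichotomy a b with h | h | h
  · rw [(cmp_eq_lt_iff _ _).2 h, (cmp_eq_lt_iff _ _).2 (h1.1 h)]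
  · subst h
    have : a' = b' := le_antisymm (not_lt.1 (fun hc => lt_irrefl a (h2.2 hc)))
      (not_lt.1 (fun hc => lt_irrefl a (h1.2 hc)))
    rw [this, cmp_self_eq_eq, cmp_self_eq_eq]
  · rw [(cmp_eq_gt_iff _ _).2 h, (cmp_eq_gt_iff _ _).2 (h2.1 h)]

/-- For each `n ≥ 1`, the linear order `ℚ + n + ℚ` is weakly homogeneous. -/
theorem rat_fin_rat_weaklyHomogeneous :
    ∀ n : ℕ, 1 ≤ n → WeaklyHomogeneousLO (ℚ ⊕ₗ (Fin n ⊕ₗ ℚ)) := by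
  intro n hn
  classical
  let L : ℚ → ℚ ⊕ₗ (Fin n ⊕ₗ ℚ) := fun q => toLex (Sum.inl q)
  let M : Fin n → ℚ ⊕ₗ (Fin n ⊕ₗ ℚ) := fun i => toLex (Sum.inr (toLex (Sum.inl i)))
  let R : ℚ → ℚ ⊕ₗ (Fin n ⊕ₗ ℚ) := fun q => toLex (Sum.inr (toLex (Sum.inr q)))
  let i0 : Fin n := ⟨0, hn⟩
  let il : Fin n := ⟨n - 1, Nat.sub_lt hn one_pos⟩
  have hleft : ∀ z : ℚ ⊕ₗ (Fin n ⊕ₗ ℚ), z < M i0 → ∃ q, z = L q := by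
    rintro (q | (i | q)) h
    · exact ⟨q, rfl⟩
    · exfalso
      have : i < i0 := Sum.Lex.inl_lt_inl_iff.1 (Sum.Lex.inr_lt_inr_iff.1 h)
      exact Nat.not_lt_zero i.val this
    · exact absurd (Sum.Lex.inr_lt_inr_iff.1 h) Sum.Lex.not_inr_lt_inl
  have hright : ∀ z : ℚ ⊕ₗ (Fin n ⊕ₗ ℚ), M il < z → ∃ q, z = R q := by
    rintro (q | (i | q)) h
    · exact absurd h Sum.Lex.not_inr_lt_inl
    · exfalso
      have h1 : n - 1 < (i : ℕ) :=
        Fin.lt_def.1 (Sum.Lex.inl_lt_inl_iff.1 (Sum.Lex.inr_lt_inr_iff.1 h))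
      have h2 := i.isLt
      omega
    · exact ⟨q, rfl⟩
  refine ⟨Finset.univ.image M, ?_⟩
  intro s t hs ht hPs f hfix
  have hMP : ∀ i, M i ∈ Finset.univ.image M := fun i =>
    Finset.mem_image_of_mem M (Finset.mem_univ i)
  have hMs : ∀ i, M i ∈ s := fun i => hPs (hMP i)
  have hfM : ∀ i, (f ⟨M i, hMs i⟩ : ℚ ⊕ₗ (Fin n ⊕ₗ ℚ)) = M i := fun i =>
    hfix (M i) (hMs i) (hMP i)
  have := hs.to_subtype
  -- the left partial iso
  let S₁ : Set (ℚ × ℚ) :=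
    {y | ∃ h : L y.1 ∈ s, (f ⟨L y.1, h⟩ : ℚ ⊕ₗ (Fin n ⊕ₗ ℚ)) = L y.2}
  let d : ℚ ⊕ₗ (Fin n ⊕ₗ ℚ) → ℚ := fun z => Sum.elim id (fun _ => 0) (ofLex z)
  have hS₁fin : S₁.Finite := by
    refine Set.Finite.subset (Set.finite_range
      (fun x : s => (d x.1, d ((f x : t) : ℚ ⊕ₗ (Fin n ⊕ₗ ℚ))))) ?_
    rintro ⟨q, q'⟩ ⟨h, hf⟩
    exact ⟨⟨L q, h⟩, by simp only [hf]; rfl⟩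
  have hlt₁ : ∀ y ∈ S₁, ∀ y' ∈ S₁, ((y : ℚ × ℚ).1 < (y' : ℚ × ℚ).1 ↔ y.2 < y'.2) := by
    rintro ⟨a, b⟩ ⟨h, hf⟩ ⟨a', b'⟩ ⟨h', hf'⟩
    calc a < a' ↔ (⟨L a, h⟩ : s) < ⟨L a', h'⟩ := by
          rw [Subtype.mk_lt_mk]; exact Sum.Lex.inl_lt_inl_iff.symm
      _ ↔ f ⟨L a, h⟩ < f ⟨L a', h'⟩ := f.lt_iff_lt.symm
      _ ↔ (f ⟨L a, h⟩ : ℚ ⊕ₗ (Fin n ⊕ₗ ℚ)) < (f ⟨L a', h'⟩ : ℚ ⊕ₗ (Fin n ⊕ₗ ℚ)) :=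
          Subtype.coe_lt_coe.symm
      _ ↔ b < b' := by rw [hf, hf']; exact Sum.Lex.inl_lt_inl_iff
  let p₁ : Order.PartialIso ℚ ℚ := ⟨hS₁fin.toFinset, by
    intro y hy y' hy'
    rw [Set.Finite.mem_toFinset] at hy hy'
    exact cmp_congr' (hlt₁ y hy y' hy') (hlt₁ y' hy' y hy)⟩
  -- the right partial iso
  let S₂ : Set (ℚ × ℚ) :=
    {y | ∃ h : R y.1 ∈ s, (f ⟨R y.1, h⟩ : ℚ ⊕ₗ (Fin n ⊕ₗ ℚ)) = R y.2}
  let d' : ℚ ⊕ₗ (Fin n ⊕ₗ ℚ) → ℚ :=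
    fun z => Sum.elim (fun _ => 0) (fun w => Sum.elim (fun _ => 0) id (ofLex w)) (ofLex z)
  have hS₂fin : S₂.Finite := by
    refine Set.Finite.subset (Set.finite_range
      (fun x : s => (d' x.1, d' ((f x : t) : ℚ ⊕ₗ (Fin n ⊕ₗ ℚ))))) ?_
    rintro ⟨q, q'⟩ ⟨h, hf⟩
    exact ⟨⟨R q, h⟩, by simp only [hf]; rfl⟩
  have hlt₂ : ∀ y ∈ S₂, ∀ y' ∈ S₂, ((y : ℚ × ℚ).1 < (y' : ℚ × ℚ).1 ↔ y.2 < y'.2) := by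
    rintro ⟨a, b⟩ ⟨h, hf⟩ ⟨a', b'⟩ ⟨h', hf'⟩
    calc a < a' ↔ (⟨R a, h⟩ : s) < ⟨R a', h'⟩ := by
          rw [Subtype.mk_lt_mk]
          exact (Iff.trans Sum.Lex.inr_lt_inr_iff Sum.Lex.inr_lt_inr_iff).symm
      _ ↔ f ⟨R a, h⟩ < f ⟨R a', h'⟩ := f.lt_iff_lt.symm
      _ ↔ (f ⟨R a, h⟩ : ℚ ⊕ₗ (Fin n ⊕ₗ ℚ)) < (f ⟨R a', h'⟩ : ℚ ⊕ₗ (Fin n ⊕ₗ ℚ)) :=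
          Subtype.coe_lt_coe.symm
      _ ↔ b < b' := by
          rw [hf, hf']
          exact Iff.trans Sum.Lex.inr_lt_inr_iff Sum.Lex.inr_lt_inr_iff
  let p₂ : Order.PartialIso ℚ ℚ := ⟨hS₂fin.toFinset, by
    intro y hy y' hy'
    rw [Set.Finite.mem_toFinset] at hy hy'
    exact cmp_congr' (hlt₂ y hy y' hy') (hlt₂ y' hy' y hy)⟩
  obtain ⟨g₁, hg₁⟩ := exists_orderIso_extends p₁
  obtain ⟨g₂, hg₂⟩ := exists_orderIso_extends p₂
  refine ⟨sumLexCongrIso g₁ (sumLexCongrIso (OrderIso.refl (Fin n)) g₂), ?_⟩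
  rintro ⟨(q | (i | q)), hz⟩
  · -- left element
    have hlt : (f ⟨L q, hz⟩ : ℚ ⊕ₗ (Fin n ⊕ₗ ℚ)) < M i0 := by
      rw [← hfM i0, Subtype.coe_lt_coe]
      exact f.lt_iff_lt.2 (Subtype.mk_lt_mk.2 (Sum.Lex.inl_lt_inr _ _))
    obtain ⟨q', hq'⟩ := hleft _ hlt
    have hmem : (q, q') ∈ S₁ := ⟨hz, hq'⟩
    have hgq : g₁ q = q' := hg₁ (q, q') (hS₁fin.mem_toFinset.2 hmem)
    show sumLexCongrIso g₁ (sumLexCongrIso (OrderIso.refl (Fin n)) g₂) (L q)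
      = (f ⟨L q, hz⟩ : ℚ ⊕ₗ (Fin n ⊕ₗ ℚ))
    rw [hq']
    show toLex (Sum.inl (g₁ q)) = L q'
    rw [hgq]
  · -- middle element
    show sumLexCongrIso g₁ (sumLexCongrIso (OrderIso.refl (Fin n)) g₂) (M i)
      = (f ⟨M i, hz⟩ : ℚ ⊕ₗ (Fin n ⊕ₗ ℚ))
    rw [hfix (M i) hz (hMP i)]
    rfl
  · -- right element
    have hlt : M il < (f ⟨R q, hz⟩ : ℚ ⊕ₗ (Fin n ⊕ₗ ℚ)) := by
      rw [← hfM il, Subtype.coe_lt_coe]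
      refine f.lt_iff_lt.2 (Subtype.mk_lt_mk.2 ?_)
      exact Sum.Lex.inr_lt_inr_iff.2 (Sum.Lex.inl_lt_inr _ _)
    obtain ⟨q', hq'⟩ := hright _ hlt
    have hmem : (q, q') ∈ S₂ := ⟨hz, hq'⟩
    have hgq : g₂ q = q' := hg₂ (q, q') (hS₂fin.mem_toFinset.2 hmem)
    show sumLexCongrIso g₁ (sumLexCongrIso (OrderIso.refl (Fin n)) g₂) (R q)
      = (f ⟨R q, hz⟩ : ℚ ⊕ₗ (Fin n ⊕ₗ ℚ))
    rw [hq']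
    show toLex (Sum.inr (toLex (Sum.inr (g₂ q)))) = R q'
    rw [hgq]
end

section
/- The linear order ℚ + ℕ + ℚ (the rationals, followed by a copy of the natural numbers, followed by the rationals) is not weakly homogeneous: for every finite set P of elements there exists an order isomorphism between finite subsets fixing P pointwise that does not extend to an order automorphism. -/
open Sum

abbrev RNR := ℚ ⊕ₗ (ℕ ⊕ₗ ℚ)

def lft (q : ℚ) : RNR := toLex (Sum.inl q)
def mid (n : ℕ) : RNR := toLex (Sum.inr (toLex (Sum.inl n)))
def rgt (q : ℚ) : RNR := toLex (Sum.inr (toLex (Sum.inr q)))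

lemma RNR_cases (y : RNR) : (∃ q, y = lft q) ∨ (∃ n, y = mid n) ∨ (∃ q, y = rgt q) := by
  rcases y with (q | (n | q))
  exacts [Or.inl ⟨q, rfl⟩, Or.inr (Or.inl ⟨n, rfl⟩), Or.inr (Or.inr ⟨q, rfl⟩)]

lemma mid_lt_mid {m n : ℕ} : mid m < mid n ↔ m < n := by
  simp [mid, Sum.Lex.inr_lt_inr_iff, Sum.Lex.inl_lt_inl_iff]

lemma mid_le_mid {m n : ℕ} : mid m ≤ mid n ↔ m ≤ n := by
  simp [mid, Sum.Lex.inr_le_inr_iff, Sum.Lex.inl_le_inl_iff]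

lemma lft_lt_lft {a b : ℚ} : lft a < lft b ↔ a < b := Sum.Lex.inl_lt_inl_iff
lemma rgt_lt_rgt {a b : ℚ} : rgt a < rgt b ↔ a < b := by
  simp [rgt, Sum.Lex.inr_lt_inr_iff, Sum.Lex.inr_lt_inr_iff]
lemma lft_lt_mid (q : ℚ) (n : ℕ) : lft q < mid n := Sum.Lex.inl_lt_inr _ _
lemma lft_lt_rgt (q p : ℚ) : lft q < rgt p := Sum.Lex.inl_lt_inr _ _
lemma mid_lt_rgt (n : ℕ) (q : ℚ) : mid n < rgt q :=
  Sum.Lex.inr_lt_inr_iff.mpr (Sum.Lex.inl_lt_inr _ _)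

lemma mid_inj : Function.Injective mid := fun a b h =>
  le_antisymm (mid_le_mid.mp h.le) (mid_le_mid.mp h.ge)

lemma mid_covBy (n : ℕ) : mid n ⋖ mid (n + 1) := by
  constructor
  · exact mid_lt_mid.mpr (Nat.lt_succ_self n)
  · intro y h1 h2
    rcases RNR_cases y with ⟨q, rfl⟩ | ⟨m, rfl⟩ | ⟨q, rfl⟩
    · exact absurd h1 (not_lt.mpr (lft_lt_mid q n).le)
    · have := mid_lt_mid.mp h1; have := mid_lt_mid.mp h2; omega
    · exact absurd h2 (not_lt.mpr (mid_lt_rgt (n+1) q).le)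

lemma covBy_mid_unique {n : ℕ} {y : RNR} (h : mid n ⋖ y) : y = mid (n + 1) := by
  rcases lt_trichotomy y (mid (n+1)) with hlt | heq | hgt
  · exact absurd hlt ((mid_covBy n).2 h.1)
  · exact heq
  · exact absurd hgt (h.2 (mid_lt_mid.mpr (Nat.lt_succ_self n)))

-- only middle elements are covered
lemma eq_mid_of_covBy {x y : RNR} (h : x ⋖ y) : ∃ n, x = mid n := by
  rcases RNR_cases x with ⟨q, rfl⟩ | ⟨n, rfl⟩ | ⟨q, rfl⟩
  · -- lft q ⋖ y impossible
    exfalso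
    rcases RNR_cases y with ⟨p, rfl⟩ | ⟨m, rfl⟩ | ⟨p, rfl⟩
    · have hqp : q < p := lft_lt_lft.mp h.1
      exact h.2 (lft_lt_lft.mpr (by linarith : q < (q+p)/2))
        (lft_lt_lft.mpr (by linarith : (q+p)/2 < p))
    · exact h.2 (lft_lt_lft.mpr (lt_add_one q)) (lft_lt_mid _ _)
    · exact h.2 (lft_lt_lft.mpr (lt_add_one q)) (lft_lt_rgt _ _)
  · exact ⟨n, rfl⟩
  · exfalso
    rcases RNR_cases y with ⟨p, rfl⟩ | ⟨m, rfl⟩ | ⟨p, rfl⟩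
    · exact absurd h.1 (not_lt.mpr (lft_lt_rgt p q).le)
    · exact absurd h.1 (not_lt.mpr (mid_lt_rgt m q).le)
    · have hqp : q < p := rgt_lt_rgt.mp h.1
      exact h.2 (rgt_lt_rgt.mpr (by linarith : q < (q+p)/2))
        (rgt_lt_rgt.mpr (by linarith : (q+p)/2 < p))

lemma orderIso_fixes_mid (g : RNR ≃o RNR) (n : ℕ) : g (mid n) = mid n := by
  induction n with
  | zero =>
    -- g (mid 0) is a mid element, and so is g.symm (mid 0)
    have h0 : ∀ (h : RNR ≃o RNR), ∃ m, h (mid 0) = mid m := by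
      intro h
      have hc : h (mid 0) ⋖ h (mid 1) := by
        exact (apply_covBy_apply_iff h).mpr (mid_covBy 0)
      exact eq_mid_of_covBy hc
    obtain ⟨m, hm⟩ := h0 g
    obtain ⟨k, hk⟩ := h0 g.symm
    have h1 : g (mid k) = mid 0 := by rw [← hk, OrderIso.apply_symm_apply]
    have : mid m ≤ mid 0 := by
      rw [← h1, ← hm]
      exact g.monotone (show mid 0 ≤ mid k from mid_le_mid.mpr (Nat.zero_le k))
    have := mid_le_mid.mp this
    rw [hm]; congr 1; omega
  | succ n ih =>
    have hc : g (mid n) ⋖ g (mid (n+1)) := by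
      exact (apply_covBy_apply_iff g).mpr (mid_covBy n)
    rw [ih] at hc
    exact covBy_mid_unique hc

/-- The linear order `ℚ + ℕ + ℚ` is not weakly homogeneous. -/
theorem rat_nat_rat_not_weaklyHomogeneous :
    ¬ WeaklyHomogeneousLO (ℚ ⊕ₗ (ℕ ⊕ₗ ℚ)) := by
  rintro ⟨P, hP⟩
  have hSfin : {n : ℕ | mid n ∈ P}.Finite :=
    Set.Finite.preimage mid_inj.injOn P.finite_toSet
  obtain ⟨b, hb⟩ := hSfin.bddAbove
  set n0 := b + 1 with hn0
  have hmem : ∀ m, n0 ≤ m → mid m ∉ (P : Set RNR) := by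
    intro m hm hmP
    have : m ≤ b := hb hmP
    omega
  have h0 : mid n0 ∉ (P : Set RNR) := hmem n0 le_rfl
  have h1 : mid (n0 + 1) ∉ (P : Set RNR) := hmem _ (by omega)
  set s : Set RNR := ↑P ∪ {mid n0} with hs
  set t : Set RNR := ↑P ∪ {mid (n0 + 1)} with ht
  have hms : mid n0 ∈ s := Or.inr rfl
  have hmt : mid (n0 + 1) ∈ t := Or.inr rfl
  have hPs : (↑P : Set RNR) ⊆ s := Set.subset_union_left
  have sfin : s.Finite := P.finite_toSet.union (Set.finite_singleton _)
  have tfin : t.Finite := P.finite_toSet.union (Set.finite_singleton _)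
  have toMem : ∀ x : s, (if (x : RNR) = mid n0 then mid (n0 + 1) else (x : RNR)) ∈ t := by
    rintro ⟨x, hx | hx⟩
    · by_cases hx0 : x = mid n0
      · simp only [hx0, if_pos rfl]; exact hmt
      · simp only [if_neg hx0]; exact Or.inl hx
    · rw [Set.mem_singleton_iff] at hx; subst hx
      simp only [if_pos rfl]; exact hmt
  have invMem : ∀ y : t, (if (y : RNR) = mid (n0 + 1) then mid n0 else (y : RNR)) ∈ s := by
    rintro ⟨y, hy | hy⟩
    · by_cases hy0 : y = mid (n0 + 1)
      · simp only [hy0, if_pos rfl]; exact hms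
      · simp only [if_neg hy0]; exact Or.inl hy
    · rw [Set.mem_singleton_iff] at hy; subst hy
      simp only [if_pos rfl]; exact hms
  set F : s → t := fun x => ⟨if (x : RNR) = mid n0 then mid (n0 + 1) else (x : RNR), toMem x⟩
    with hF
  set G : t → s := fun y => ⟨if (y : RNR) = mid (n0 + 1) then mid n0 else (y : RNR), invMem y⟩
    with hG
  have hne01 : mid n0 ≠ mid (n0 + 1) := fun h => by
    have := mid_inj h; omega
  have hleft : Function.LeftInverse G F := by
    rintro ⟨x, hx⟩
    apply Subtype.ext
    by_cases hx0 : x = mid n0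
    · simp [hF, hG, hx0]
    · have hxP : x ∈ (P : Set RNR) := hx.resolve_right hx0
      have hx1 : x ≠ mid (n0 + 1) := fun h => h1 (h ▸ hxP)
      simp [hF, hG, hx0, hx1]
  have hright : Function.RightInverse G F := by
    rintro ⟨y, hy⟩
    apply Subtype.ext
    by_cases hy0 : y = mid (n0 + 1)
    · simp [hF, hG, hy0]
    · have hyP : y ∈ (P : Set RNR) := hy.resolve_right hy0
      have hy1 : y ≠ mid n0 := fun h => h0 (h ▸ hyP)
      simp [hF, hG, hy0, hy1]
  have kcov : ∀ y : RNR, mid n0 < y → mid (n0 + 1) ≤ y := fun y hy =>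
    not_lt.mp fun h => (mid_covBy n0).2 hy h
  have hmono : ∀ x y : s, (x : RNR) < (y : RNR) → (F x : RNR) < (F y : RNR) := by
    rintro ⟨x, hx⟩ ⟨y, hy⟩ hxy
    by_cases hx0 : x = mid n0
    · subst hx0
      have hy0 : y ≠ mid n0 := ne_of_gt hxy
      have hyP : y ∈ (P : Set RNR) := hy.resolve_right hy0
      have hle : mid (n0 + 1) ≤ y := kcov y hxy
      have hne : mid (n0 + 1) ≠ y := by rintro rfl; exact h1 hyP
      simpa [hF, hy0] using lt_of_le_of_ne hle hne
    · by_cases hy0 : y = mid n0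
      · subst hy0
        have : x < mid (n0 + 1) := hxy.trans (mid_lt_mid.mpr (by omega))
        simpa [hF, hx0] using this
      · simpa [hF, hx0, hy0] using hxy
  let f : s ≃o t :=
    { toFun := F, invFun := G, left_inv := hleft, right_inv := hright,
      map_rel_iff' := by
        intro a b
        show F a ≤ F b ↔ a ≤ b
        rw [← Subtype.coe_le_coe, ← Subtype.coe_le_coe]
        constructor
        · intro h
          by_contra hab
          exact absurd h (not_le.mpr (hmono b a (not_le.mp hab)))
        · intro h
          rcases eq_or_lt_of_le h with heq | hlt
          · rw [show a = b from Subtype.ext heq]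
          · exact (hmono a b hlt).le }
  have hfix : ∀ (p : RNR) (hp : p ∈ s), p ∈ P → (f ⟨p, hp⟩ : RNR) = p := by
    intro p hp hpP
    have hp0 : p ≠ mid n0 := fun h => h0 (h ▸ hpP)
    simp [f, hF, hp0]
  obtain ⟨g, hg⟩ := hP s t sfin tfin hPs f hfix
  have hgm : g (mid n0) = mid (n0 + 1) := by
    have := hg ⟨mid n0, hms⟩
    simpa [f, hF] using this
  rw [orderIso_fixes_mid g n0] at hgm
  exact hne01 hgm
end

section
/- Let L be a linear order with successor and predecessor functions s, p (where s(x) is the least element greater than x if it exists, else x, and p(x) is the greatest element less than x if it exists, else x). If the expansion (L, <, s, p) is homogeneous, then for every block type t occurring in more than one block of L, the set of blocks of type t has no first block, no last block, and is dense in the interval of Bk(L) that it spans. -/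
/-- A set is closed under the successor and predecessor functions. -/
def IsSPClosed {α : Type*} (s p : α → α) (A : Set α) : Prop :=
  ∀ x ∈ A, s x ∈ A ∧ p x ∈ A

/-- `A` is a finitely generated sp-substructure: it is closed under `s` and `p`
and is the smallest such set containing some finite set. -/
def IsFinGenSP {α : Type*} (s p : α → α) (A : Set α) : Prop :=
  IsSPClosed s p A ∧ ∃ F : Finset α, ↑F ⊆ A ∧
    ∀ B : Set α, IsSPClosed s p B → ↑F ⊆ B → A ⊆ B

/-- `(α, <, s, p)` is homogeneous: every isomorphism between finitely generated
sp-substructures (preserving the order and commuting with `s` and `p`) extends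
to an automorphism of the whole structure. -/
def SPHomogeneous {α : Type*} [LinearOrder α] (s p : α → α) : Prop :=
  ∀ (A B : Set α) (f : α → α), IsFinGenSP s p A → IsFinGenSP s p B →
    Set.BijOn f A B →
    (∀ x ∈ A, ∀ y ∈ A, x < y → f x < f y) →
    (∀ x ∈ A, f (s x) = s (f x)) → (∀ x ∈ A, f (p x) = p (f x)) →
    ∃ g : α ≃o α, (∀ x, g (s x) = s (g x)) ∧ (∀ x, g (p x) = p (g x)) ∧
      ∀ x ∈ A, g x = f x

section Base
variable {α : Type*} [LinearOrder α]

lemma finfar_refl (x : α) : FinFar x x := by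
  simp [FinFar]

lemma finfar_symm {x y : α} (h : FinFar x y) : FinFar y x := by
  rwa [FinFar, min_comm, max_comm]

lemma finfar_mem {a b z : α} (h : FinFar a b) (h1 : min a b ≤ z) (h2 : z ≤ max a b) :
    FinFar a z := by
  refine h.subset (Set.Icc_subset_Icc (le_min (min_le_left _ _) h1) (max_le (le_max_left _ _) h2))

lemma finfar_trans {x y z : α} (h1 : FinFar x y) (h2 : FinFar y z) : FinFar x z := by
  refine (h1.union h2).subset ?_
  rintro w ⟨hw1, hw2⟩
  rcases le_total w y with hwy | hwy
  · rcases min_le_iff.mp hw1 with h | h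
    · exact Or.inl ⟨(min_le_left x y).trans h, hwy.trans (le_max_right x y)⟩
    · exact Or.inr ⟨(min_le_right y z).trans h, hwy.trans (le_max_left y z)⟩
  · rcases le_max_iff.mp hw2 with h | h
    · exact Or.inl ⟨(min_le_right x y).trans hwy, h.trans (le_max_left x y)⟩
    · exact Or.inr ⟨(min_le_left y z).trans hwy, h.trans (le_max_right y z)⟩

lemma finfar_between {a b z : α} (h : FinFar a b) (h1 : a ≤ z) (h2 : z ≤ b) : FinFar a z :=
  finfar_mem h ((min_le_left a b).trans h1) (h2.trans (le_max_right a b))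

lemma covby_finfar {x y : α} (h : x ⋖ y) : FinFar x y := by
  have hsub : Set.Icc (min x y) (max x y) ⊆ {x, y} := by
    rw [min_eq_left h.1.le, max_eq_right h.1.le]
    rintro w ⟨hw1, hw2⟩
    rcases eq_or_lt_of_le hw1 with h1 | h1
    · exact Or.inl h1.symm
    · have : w = y := by
        rcases lt_or_ge w y with h2 | h2
        · exact absurd h2 (h.2 h1)
        · exact le_antisymm hw2 h2
      exact Or.inr this
  exact Set.Finite.subset (by simp : ({x, y} : Set α).Finite) hsub

lemma lt_of_not_finfar {a b x y : α} (h : ¬ FinFar a b) (hab : a < b)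
    (hx : FinFar a x) (hy : FinFar b y) : x < y := by
  by_contra hxy
  push_neg at hxy
  rcases le_total y a with hya | hya
  · exact h (finfar_symm (finfar_mem hy ((min_le_right b y).trans hya)
      (hab.le.trans (le_max_left b y))))
  · exact h (finfar_trans (finfar_mem hx ((min_le_left a x).trans hya)
      (hxy.trans (le_max_right a x))) (finfar_symm hy))

set_option linter.unusedSectionVars false
section SP
variable (s p : α → α)

/-- The sp-closure of a set: the smallest sp-closed superset. -/
def spCl (X : Set α) : Set α := ⋂₀ {B | IsSPClosed s p B ∧ X ⊆ B}

variable {s p}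

lemma isSPClosed_spCl (X : Set α) : IsSPClosed s p (spCl s p X) := by
  intro x hx
  constructor
  · intro B hB
    exact (hB.1 x (hx B hB)).1
  · intro B hB
    exact (hB.1 x (hx B hB)).2

lemma subset_spCl (X : Set α) : X ⊆ spCl s p X := by
  intro x hx B hB
  exact hB.2 hx

lemma spCl_subset {X B : Set α} (hB : IsSPClosed s p B) (hX : X ⊆ B) : spCl s p X ⊆ B :=
  fun _ hx => hx B ⟨hB, hX⟩

lemma isFinGenSP_spCl (F : Finset α) : IsFinGenSP s p (spCl s p ↑F) :=
  ⟨isSPClosed_spCl _, F, subset_spCl _, fun _ hB hF => spCl_subset hB hF⟩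

lemma isSPClosed_union {A B : Set α} (hA : IsSPClosed s p A) (hB : IsSPClosed s p B) :
    IsSPClosed s p (A ∪ B) := by
  rintro x (hx | hx)
  · exact ⟨Or.inl (hA x hx).1, Or.inl (hA x hx).2⟩
  · exact ⟨Or.inr (hB x hx).1, Or.inr (hB x hx).2⟩

lemma spCl_pair (a b : α) : spCl s p {a, b} = spCl s p {a} ∪ spCl s p {b} := by
  apply le_antisymm
  · apply spCl_subset (isSPClosed_union (isSPClosed_spCl _) (isSPClosed_spCl _))
    rintro x (rfl | rfl)
    · exact Or.inl (subset_spCl _ rfl)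
    · exact Or.inr (subset_spCl _ rfl)
  · apply Set.union_subset
    · exact spCl_subset (isSPClosed_spCl _) (by intro x hx; exact subset_spCl _ (Or.inl hx))
    · exact spCl_subset (isSPClosed_spCl _)
        (by rintro x rfl; exact subset_spCl _ (Or.inr rfl))

variable (hs : ∀ x : α, (∀ y, x ⋖ y → s x = y) ∧ ((∀ y, ¬ x ⋖ y) → s x = x))
variable (hp : ∀ x : α, (∀ y, y ⋖ x → p x = y) ∧ ((∀ y, ¬ y ⋖ x) → p x = x))

include hs in
lemma finfar_s (x : α) : FinFar x (s x) := by
  by_cases h : ∃ y, x ⋖ y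
  · obtain ⟨y, hy⟩ := h
    rw [(hs x).1 y hy]
    exact covby_finfar hy
  · push_neg at h
    rw [(hs x).2 h]
    exact finfar_refl x

include hp in
lemma finfar_p (x : α) : FinFar x (p x) := by
  by_cases h : ∃ y, y ⋖ x
  · obtain ⟨y, hy⟩ := h
    rw [(hp x).1 y hy]
    exact finfar_symm (covby_finfar hy)
  · push_neg at h
    rw [(hp x).2 h]
    exact finfar_refl x

include hs hp in
lemma isSPClosed_block (a : α) : IsSPClosed s p {y | FinFar a y} := by
  intro x hx
  exact ⟨finfar_trans hx (finfar_s hs x), finfar_trans hx (finfar_p hp x)⟩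

include hs hp in
lemma spCl_singleton_subset (a : α) : spCl s p {a} ⊆ {y | FinFar a y} :=
  spCl_subset (isSPClosed_block hs hp a) (by rintro x hx; rw [Set.mem_singleton_iff] at hx; subst hx; exact finfar_refl x)

end SP

section Blk
variable {a b : α}

/-- Order isomorphism between blocks of equivalent points. -/
def blkCongr (h : FinFar a b) : {y // FinFar a y} ≃o {y // FinFar b y} where
  toFun x := ⟨x.1, finfar_trans (finfar_symm h) x.2⟩
  invFun x := ⟨x.1, finfar_trans h x.2⟩
  left_inv x := rfl
  right_inv x := rfl
  map_rel_iff' := Iff.rfl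

lemma covby_subtype_iff {x y : α} (hx : FinFar a x) (hy : FinFar a y) :
    (⟨x, hx⟩ : {y // FinFar a y}) ⋖ ⟨y, hy⟩ ↔ x ⋖ y := by
  constructor
  · rintro ⟨hlt, hmid⟩
    refine ⟨Subtype.mk_lt_mk.mp hlt, ?_⟩
    intro c hc1 hc2
    have hcf : FinFar a c :=
      finfar_trans hx (finfar_between (finfar_trans (finfar_symm hx) hy) hc1.le hc2.le)
    exact hmid (Subtype.mk_lt_mk.mpr hc1 : (⟨x, hx⟩ : {y // FinFar a y}) < ⟨c, hcf⟩)
      (Subtype.mk_lt_mk.mpr hc2)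
  · rintro ⟨hlt, hmid⟩
    exact ⟨Subtype.mk_lt_mk.mpr hlt,
      fun c h1 h2 => hmid (Subtype.mk_lt_mk.mp h1) (Subtype.mk_lt_mk.mp h2)⟩

lemma orderIso_finfar (g : α ≃o α) {x y : α} (h : FinFar x y) : FinFar (g x) (g y) := by
  have himg : Set.Icc (min (g x) (g y)) (max (g x) (g y)) ⊆
      g '' Set.Icc (min x y) (max x y) := by
    rintro z ⟨hz1, hz2⟩
    refine ⟨g.symm z, ⟨?_, ?_⟩, g.apply_symm_apply z⟩
    · have h1 := g.symm.monotone hz1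
      rwa [g.symm.monotone.map_min, g.symm_apply_apply, g.symm_apply_apply] at h1
    · have h1 := g.symm.monotone hz2
      rwa [g.symm.monotone.map_max, g.symm_apply_apply, g.symm_apply_apply] at h1
  exact (h.image g).subset himg

lemma orderIso_finfar_iff (g : α ≃o α) {x y : α} : FinFar (g x) (g y) ↔ FinFar x y :=
  ⟨fun h => by have := orderIso_finfar g.symm h; simpa using this, orderIso_finfar g⟩

/-- An automorphism induces an isomorphism between a block and its image block. -/
def autoBlkIso (g : α ≃o α) (c : α) : {y // FinFar c y} ≃o {y // FinFar (g c) y} where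
  toFun x := ⟨g x.1, orderIso_finfar g x.2⟩
  invFun x := ⟨g.symm x.1, by have := orderIso_finfar g.symm x.2; simpa using this⟩
  left_inv x := Subtype.ext (g.symm_apply_apply x.1)
  right_inv x := Subtype.ext (g.apply_symm_apply x.1)
  map_rel_iff' := by
    intro x y
    simp [Subtype.mk_le_mk]

end Blk

section ExtMap
variable {s p : α → α} {a b : α}

open scoped Classical in
/-- Extend a block isomorphism to a function on the whole order (identity off the block). -/
noncomputable def extMap (e : {y // FinFar a y} ≃o {y // FinFar b y}) : α → α :=
  fun x => if h : FinFar a x then (e ⟨x, h⟩ : α) else x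

lemma extMap_apply (e : {y // FinFar a y} ≃o {y // FinFar b y}) {x : α} (h : FinFar a x) :
    extMap e x = (e ⟨x, h⟩ : α) := dif_pos h

lemma extMap_finfar (e : {y // FinFar a y} ≃o {y // FinFar b y}) {x : α} (h : FinFar a x) :
    FinFar b (extMap e x) := by
  rw [extMap_apply e h]; exact (e ⟨x, h⟩).2

lemma extMap_lt (e : {y // FinFar a y} ≃o {y // FinFar b y}) {x y : α}
    (hx : FinFar a x) (hy : FinFar a y) (hlt : x < y) : extMap e x < extMap e y := by
  rw [extMap_apply e hx, extMap_apply e hy]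
  exact Subtype.coe_lt_coe.mpr (e.lt_iff_lt.mpr (Subtype.mk_lt_mk.mpr hlt))

lemma extMap_injOn (e : {y // FinFar a y} ≃o {y // FinFar b y}) {x y : α}
    (hx : FinFar a x) (hy : FinFar a y) (hxy : extMap e x = extMap e y) : x = y := by
  rw [extMap_apply e hx, extMap_apply e hy] at hxy
  have := e.injective (Subtype.coe_injective hxy)
  exact congrArg Subtype.val this

lemma extMap_covBy (e : {y // FinFar a y} ≃o {y // FinFar b y}) {x y : α}
    (hx : FinFar a x) (hy : FinFar a y) (h : x ⋖ y) : extMap e x ⋖ extMap e y := by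
  rw [extMap_apply e hx, extMap_apply e hy]
  exact (covby_subtype_iff (e ⟨x, hx⟩).2 (e ⟨y, hy⟩).2).mp
    ((apply_covBy_apply_iff e).mpr ((covby_subtype_iff hx hy).mpr h))

variable (hs : ∀ x : α, (∀ y, x ⋖ y → s x = y) ∧ ((∀ y, ¬ x ⋖ y) → s x = x))
variable (hp : ∀ x : α, (∀ y, y ⋖ x → p x = y) ∧ ((∀ y, ¬ y ⋖ x) → p x = x))

include hs in
lemma extMap_s (e : {y // FinFar a y} ≃o {y // FinFar b y}) {x : α} (hx : FinFar a x) :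
    extMap e (s x) = s (extMap e x) := by
  by_cases hcov : ∃ y, x ⋖ y
  · obtain ⟨y, hy⟩ := hcov
    have hyf : FinFar a y := finfar_trans hx (covby_finfar hy)
    rw [(hs x).1 y hy, (hs (extMap e x)).1 _ (extMap_covBy e hx hyf hy)]
  · push_neg at hcov
    rw [(hs x).2 hcov]
    refine ((hs (extMap e x)).2 ?_).symm
    intro z hz
    have hzf : FinFar b z := finfar_trans (extMap_finfar e hx) (covby_finfar hz)
    have h1 : (⟨extMap e x, extMap_finfar e hx⟩ : {y // FinFar b y}) ⋖ ⟨z, hzf⟩ :=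
      (covby_subtype_iff _ _).mpr hz
    have heq : (⟨extMap e x, extMap_finfar e hx⟩ : {y // FinFar b y}) = e ⟨x, hx⟩ :=
      Subtype.ext (extMap_apply e hx)
    rw [heq] at h1
    have h2 : (⟨x, hx⟩ : {y // FinFar a y}) ⋖ e.symm ⟨z, hzf⟩ := by
      have := (apply_covBy_apply_iff e.symm).mpr h1
      simpa using this
    exact hcov (e.symm ⟨z, hzf⟩) ((covby_subtype_iff hx (e.symm ⟨z, hzf⟩).2).mp h2)

include hp in
lemma extMap_p (e : {y // FinFar a y} ≃o {y // FinFar b y}) {x : α} (hx : FinFar a x) :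
    extMap e (p x) = p (extMap e x) := by
  by_cases hcov : ∃ y, y ⋖ x
  · obtain ⟨y, hy⟩ := hcov
    have hyf : FinFar a y := finfar_trans hx (finfar_symm (covby_finfar hy))
    rw [(hp x).1 y hy, (hp (extMap e x)).1 _ (extMap_covBy e hyf hx hy)]
  · push_neg at hcov
    rw [(hp x).2 hcov]
    refine ((hp (extMap e x)).2 ?_).symm
    intro z hz
    have hzf : FinFar b z := finfar_trans (extMap_finfar e hx) (finfar_symm (covby_finfar hz))
    have h1 : (⟨z, hzf⟩ : {y // FinFar b y}) ⋖ ⟨extMap e x, extMap_finfar e hx⟩ :=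
      (covby_subtype_iff _ _).mpr hz
    have heq : (⟨extMap e x, extMap_finfar e hx⟩ : {y // FinFar b y}) = e ⟨x, hx⟩ :=
      Subtype.ext (extMap_apply e hx)
    rw [heq] at h1
    have h2 : e.symm ⟨z, hzf⟩ ⋖ (⟨x, hx⟩ : {y // FinFar a y}) := by
      have := (apply_covBy_apply_iff e.symm).mpr h1
      simpa using this
    exact hcov (e.symm ⟨z, hzf⟩) ((covby_subtype_iff (e.symm ⟨z, hzf⟩).2 hx).mp h2)

end ExtMap

section Image
variable {s p : α → α}

lemma spCl_image_eq {f : α → α} {a : α}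
    (hfs : ∀ x ∈ spCl s p {a}, f (s x) = s (f x))
    (hfp : ∀ x ∈ spCl s p {a}, f (p x) = p (f x)) :
    f '' spCl s p {a} = spCl s p {f a} := by
  apply Set.Subset.antisymm
  · have hT : spCl s p {a} ⊆ {x | x ∈ spCl s p {a} ∧ f x ∈ spCl s p {f a}} := by
      apply spCl_subset
      · intro x hx
        obtain ⟨hx1, hx2⟩ := hx
        refine ⟨⟨(isSPClosed_spCl _ x hx1).1, ?_⟩, (isSPClosed_spCl _ x hx1).2, ?_⟩
        · rw [hfs x hx1]; exact (isSPClosed_spCl _ (f x) hx2).1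
        · rw [hfp x hx1]; exact (isSPClosed_spCl _ (f x) hx2).2
      · intro x hx
        rw [Set.mem_singleton_iff] at hx; subst hx
        exact ⟨subset_spCl _ rfl, subset_spCl _ rfl⟩
    rintro y ⟨x, hx, rfl⟩
    exact (hT hx).2
  · apply spCl_subset
    · rintro y ⟨x, hx, rfl⟩
      constructor
      · exact ⟨s x, (isSPClosed_spCl _ x hx).1, hfs x hx⟩
      · exact ⟨p x, (isSPClosed_spCl _ x hx).2, hfp x hx⟩
    · intro y hy
      rw [Set.mem_singleton_iff] at hy; subst hy
      exact ⟨a, subset_spCl _ rfl, rfl⟩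

lemma isFinGenSP_singleton (a : α) : IsFinGenSP s p (spCl s p {a}) := by
  have := isFinGenSP_spCl (s := s) (p := p) ({a} : Finset α)
  simpa using this

lemma isFinGenSP_pair (a b : α) : IsFinGenSP s p (spCl s p {a, b}) := by
  have := isFinGenSP_spCl (s := s) (p := p) ({a, b} : Finset α)
  simpa using this

variable (hs : ∀ x : α, (∀ y, x ⋖ y → s x = y) ∧ ((∀ y, ¬ x ⋖ y) → s x = x))
variable (hp : ∀ x : α, (∀ y, y ⋖ x → p x = y) ∧ ((∀ y, ¬ y ⋖ x) → p x = x))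

include hs hp in
/-- From a block isomorphism with source block of `a`, homogeneity produces a global
automorphism commuting with `s` and `p` and sending `a` into the block of `b`. -/
lemma exists_auto (hhom : SPHomogeneous s p) {a b : α}
    (e : {y // FinFar a y} ≃o {y // FinFar b y}) :
    ∃ g : α ≃o α, (∀ x, g (s x) = s (g x)) ∧ (∀ x, g (p x) = p (g x)) ∧ FinFar b (g a) := by
  have hsub := spCl_singleton_subset hs hp a
  have hcs : ∀ x ∈ spCl s p {a}, extMap e (s x) = s (extMap e x) :=
    fun x hx => extMap_s hs e (hsub hx)
  have hcp : ∀ x ∈ spCl s p {a}, extMap e (p x) = p (extMap e x) :=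
    fun x hx => extMap_p hp e (hsub hx)
  have himg := spCl_image_eq hcs hcp
  have hbij : Set.BijOn (extMap e) (spCl s p {a}) (spCl s p {extMap e a}) := by
    refine ⟨fun x hx => himg ▸ Set.mem_image_of_mem _ hx, ?_, ?_⟩
    · intro x hx y hy hxy
      exact extMap_injOn e (hsub hx) (hsub hy) hxy
    · intro y hy
      rw [← himg] at hy
      exact hy
  obtain ⟨g, hg1, hg2, hg3⟩ := hhom (spCl s p {a}) (spCl s p {extMap e a}) (extMap e)
    (isFinGenSP_singleton a) (isFinGenSP_singleton _) hbij
    (fun x hx y hy hxy => extMap_lt e (hsub hx) (hsub hy) hxy) hcs hcp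
  refine ⟨g, hg1, hg2, ?_⟩
  rw [hg3 a (subset_spCl _ rfl)]
  exact extMap_finfar e (finfar_refl a)

include hs hp in
lemma move_gt (hhom : SPHomogeneous s p) {a b : α} (hab : ¬ FinFar a b)
    (e : {y // FinFar a y} ≃o {y // FinFar b y}) :
    ∃ z, a < z ∧ ¬ FinFar a z ∧ Nonempty ({y // FinFar z y} ≃o {y // FinFar a y}) := by
  have hne : a ≠ b := fun h => hab (h ▸ finfar_refl a)
  rcases lt_or_gt_of_ne hne with hlt | hgt
  · exact ⟨b, hlt, hab, ⟨e.symm⟩⟩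
  · obtain ⟨g, hg1, hg2, hg3⟩ := exists_auto hs hp hhom e
    have hba : ¬ FinFar b a := fun h => hab (finfar_symm h)
    have hga_lt : g a < a := lt_of_not_finfar hba hgt hg3 (finfar_refl a)
    refine ⟨g.symm a, ?_, ?_, ?_⟩
    · by_contra hle
      push_neg at hle
      have h2 := g.monotone hle
      rw [g.apply_symm_apply] at h2
      exact absurd (lt_of_le_of_lt h2 hga_lt) (lt_irrefl a)
    · intro h
      have h2 := orderIso_finfar g h
      rw [g.apply_symm_apply] at h2
      exact hab (finfar_trans (finfar_symm h2) (finfar_symm hg3))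
    · have iso := autoBlkIso g (g.symm a)
      rw [g.apply_symm_apply] at iso
      exact ⟨iso⟩

include hs hp in
lemma move_lt (hhom : SPHomogeneous s p) {a b : α} (hab : ¬ FinFar a b)
    (e : {y // FinFar a y} ≃o {y // FinFar b y}) :
    ∃ z, z < a ∧ ¬ FinFar a z ∧ Nonempty ({y // FinFar z y} ≃o {y // FinFar a y}) := by
  have hne : a ≠ b := fun h => hab (h ▸ finfar_refl a)
  rcases lt_or_gt_of_ne hne with hlt | hgt
  · obtain ⟨g, hg1, hg2, hg3⟩ := exists_auto hs hp hhom e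
    have hga_gt : a < g a := lt_of_not_finfar hab hlt (finfar_refl a) hg3
    refine ⟨g.symm a, ?_, ?_, ?_⟩
    · by_contra hle
      push_neg at hle
      have h2 := g.monotone hle
      rw [g.apply_symm_apply] at h2
      exact absurd (lt_of_lt_of_le hga_gt h2) (lt_irrefl a)
    · intro h
      have h2 := orderIso_finfar g h
      rw [g.apply_symm_apply] at h2
      exact hab (finfar_trans (finfar_symm h2) (finfar_symm hg3))
    · have iso := autoBlkIso g (g.symm a)
      rw [g.apply_symm_apply] at iso
      exact ⟨iso⟩
  · exact ⟨b, hgt, hab, ⟨e.symm⟩⟩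

include hs hp in
lemma between_aux (hhom : SPHomogeneous s p) {u v bm bp : α}
    (huv : u < v) (hfar : ¬ FinFar u v) (h1 : bm ≤ u) (h2 : v ≤ bp)
    (e : {y // FinFar bm y} ≃o {y // FinFar bp y}) :
    ∃ z, u < z ∧ z < v ∧ ¬ FinFar u z ∧ ¬ FinFar v z ∧
      Nonempty ({y // FinFar z y} ≃o {y // FinFar bm y}) := by
  classical
  have hub : ¬ FinFar u bp := fun h => hfar (finfar_between h huv.le h2)
  have hbmv : ¬ FinFar bm v := fun h => hfar (finfar_trans (finfar_symm (finfar_between h h1 huv.le)) h)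
  obtain ⟨g, hg1, hg2, hg3⟩ := exists_auto hs hp hhom e
  have hugb_far : ¬ FinFar u (g bm) := fun h => hub (finfar_trans h (finfar_symm hg3))
  have hu_lt_gb : u < g bm :=
    lt_of_not_finfar hub (lt_of_lt_of_le huv h2) (finfar_refl u) hg3
  set u' := g.symm u with hu'def
  have hu'bm_lt : u' < bm := by
    have h3 := g.symm.strictMono hu_lt_gb
    rwa [g.symm_apply_apply] at h3
  have hu'bm_far : ¬ FinFar u' bm := by
    intro h
    have h3 := orderIso_finfar g h
    rw [g.apply_symm_apply] at h3
    exact hugb_far h3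
  have hu'u_lt : u' < u := lt_of_lt_of_le hu'bm_lt h1
  have hu'u_far : ¬ FinFar u' u := fun h => hu'bm_far (finfar_between h hu'bm_lt.le h1)
  have hu'v_lt : u' < v := lt_trans hu'u_lt huv
  have hu'v_far : ¬ FinFar u' v := fun h => hu'u_far (finfar_between h hu'u_lt.le huv.le)
  set F : α → α := fun x => if FinFar u' x then g x else x with hFdef
  have hA1 := spCl_singleton_subset hs hp u'
  have hA2 := spCl_singleton_subset hs hp v
  have hF1 : ∀ x ∈ spCl s p {u'}, F x = g x := fun x hx => if_pos (hA1 hx)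
  have hdisj : ∀ x, FinFar v x → ¬ FinFar u' x :=
    fun x hvx hux => hu'v_far (finfar_trans hux (finfar_symm hvx))
  have hF2 : ∀ x ∈ spCl s p {v}, F x = x := fun x hx => if_neg (hdisj x (hA2 hx))
  have hgu' : g u' = u := g.apply_symm_apply u
  have himg : g '' spCl s p {u'} = spCl s p {u} := by
    have h3 := spCl_image_eq (f := fun x => g x) (a := u')
      (fun x _ => hg1 x) (fun x _ => hg2 x)
    rwa [hgu'] at h3
  have hgblk : ∀ x ∈ spCl s p {u'}, FinFar u (g x) := by
    intro x hx
    have h3 := orderIso_finfar g (hA1 hx)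
    rwa [hgu'] at h3
  have hmemA : ∀ x, x ∈ spCl s p {u', v} ↔ x ∈ spCl s p {u'} ∨ x ∈ spCl s p {v} := by
    intro x
    rw [spCl_pair]
    rfl
  have hbij : Set.BijOn F (spCl s p {u', v}) (spCl s p {u, v}) := by
    refine ⟨?_, ?_, ?_⟩
    · intro x hx
      rcases (hmemA x).mp hx with hx | hx
      · rw [hF1 x hx, spCl_pair]
        exact Or.inl (himg ▸ Set.mem_image_of_mem _ hx)
      · rw [hF2 x hx, spCl_pair]
        exact Or.inr hx
    · intro x hx y hy hxy
      rcases (hmemA x).mp hx with hx | hx <;> rcases (hmemA y).mp hy with hy | hy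
      · rw [hF1 x hx, hF1 y hy] at hxy
        exact g.injective hxy
      · rw [hF1 x hx, hF2 y hy] at hxy
        exact absurd (finfar_trans (hxy ▸ hgblk x hx) (finfar_symm (hA2 hy))) hfar
      · rw [hF2 x hx, hF1 y hy] at hxy
        exact absurd (finfar_trans (hxy ▸ hgblk y hy) (finfar_symm (hA2 hx))) hfar
      · rwa [hF2 x hx, hF2 y hy] at hxy
    · intro y hy
      rw [spCl_pair] at hy
      rcases hy with hy | hy
      · rw [← himg] at hy
        obtain ⟨x, hx, rfl⟩ := hy
        exact ⟨x, (hmemA x).mpr (Or.inl hx), hF1 x hx⟩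
      · exact ⟨y, (hmemA y).mpr (Or.inr hy), hF2 y hy⟩
  have hmono : ∀ x ∈ spCl s p {u', v}, ∀ y ∈ spCl s p {u', v}, x < y → F x < F y := by
    intro x hx y hy hxy
    rcases (hmemA x).mp hx with hx | hx <;> rcases (hmemA y).mp hy with hy | hy
    · rw [hF1 x hx, hF1 y hy]
      exact g.strictMono hxy
    · rw [hF1 x hx, hF2 y hy]
      exact lt_of_not_finfar hfar huv (hgblk x hx) (hA2 hy)
    · exact absurd hxy (not_lt.mpr (lt_of_not_finfar hu'v_far hu'v_lt (hA1 hy) (hA2 hx)).le)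
    · rwa [hF2 x hx, hF2 y hy]
  have hcomS : ∀ x ∈ spCl s p {u', v}, F (s x) = s (F x) := by
    intro x hx
    rcases (hmemA x).mp hx with hx | hx
    · rw [hF1 x hx, hF1 (s x) (isSPClosed_spCl _ x hx).1]
      exact hg1 x
    · rw [hF2 x hx, hF2 (s x) (isSPClosed_spCl _ x hx).1]
  have hcomP : ∀ x ∈ spCl s p {u', v}, F (p x) = p (F x) := by
    intro x hx
    rcases (hmemA x).mp hx with hx | hx
    · rw [hF1 x hx, hF1 (p x) (isSPClosed_spCl _ x hx).2]
      exact hg2 x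
    · rw [hF2 x hx, hF2 (p x) (isSPClosed_spCl _ x hx).2]
  obtain ⟨G, hG1, hG2, hG3⟩ := hhom (spCl s p {u', v}) (spCl s p {u, v}) F
    (isFinGenSP_pair _ _) (isFinGenSP_pair _ _) hbij hmono hcomS hcomP
  have hu'A : u' ∈ spCl s p {u', v} := subset_spCl _ (by simp)
  have hvA : v ∈ spCl s p {u', v} := subset_spCl _ (by simp)
  have hGu' : G u' = u := by
    rw [hG3 u' hu'A, hF1 u' (subset_spCl _ rfl)]
    exact hgu'
  have hGv : G v = v := by
    rw [hG3 v hvA]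
    exact hF2 v (subset_spCl _ rfl)
  refine ⟨G bm, ?_, ?_, ?_, ?_, ?_⟩
  · have h3 := G.strictMono hu'bm_lt
    rwa [hGu'] at h3
  · have h3 := G.strictMono (lt_of_le_of_lt h1 huv)
    rwa [hGv] at h3
  · intro h
    rw [← hGu'] at h
    exact hu'bm_far ((orderIso_finfar_iff G).mp h)
  · intro h
    rw [← hGv] at h
    exact hbmv (finfar_symm ((orderIso_finfar_iff G).mp h))
  · exact ⟨(autoBlkIso G bm).symm⟩

end Image
end Base

/-- If `(L, <, s, p)` is sp-homogeneous, then for every block type occurring in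
more than one block (witnessed by `x₀, x₁` in distinct order-isomorphic blocks),
the set of blocks of that type has no first block, no last block, and is dense in
the interval of blocks that it spans. -/
theorem spHomogeneous_blocks_dense {α : Type*} [LinearOrder α] (s p : α → α)
    (hs : ∀ x : α, (∀ y, x ⋖ y → s x = y) ∧ ((∀ y, ¬ x ⋖ y) → s x = x))
    (hp : ∀ x : α, (∀ y, y ⋖ x → p x = y) ∧ ((∀ y, ¬ y ⋖ x) → p x = x))
    (hhom : SPHomogeneous s p)
    (x₀ x₁ : α) (hne : ¬ FinFar x₀ x₁)
    (htype : Nonempty ({y // FinFar x₀ y} ≃o {y // FinFar x₁ y})) :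
    -- no first block of this type
    (∀ x : α, Nonempty ({y // FinFar x y} ≃o {y // FinFar x₀ y}) →
      ∃ x', x' < x ∧ ¬ FinFar x' x ∧
        Nonempty ({y // FinFar x' y} ≃o {y // FinFar x₀ y})) ∧
    -- no last block of this type
    (∀ x : α, Nonempty ({y // FinFar x y} ≃o {y // FinFar x₀ y}) →
      ∃ x', x < x' ∧ ¬ FinFar x' x ∧
        Nonempty ({y // FinFar x' y} ≃o {y // FinFar x₀ y})) ∧
    -- density in the spanned interval: between any two distinct blocks, each
    -- lying between blocks of this type, there is a block of this type
    (∀ u v : α, u < v → ¬ FinFar u v →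
      (∃ w w', w ≤ u ∧ u ≤ w' ∧
        Nonempty ({y // FinFar w y} ≃o {y // FinFar x₀ y}) ∧
        Nonempty ({y // FinFar w' y} ≃o {y // FinFar x₀ y})) →
      (∃ w w', w ≤ v ∧ v ≤ w' ∧
        Nonempty ({y // FinFar w y} ≃o {y // FinFar x₀ y}) ∧
        Nonempty ({y // FinFar w' y} ≃o {y // FinFar x₀ y})) →
      ∃ z, u < z ∧ z < v ∧ ¬ FinFar u z ∧ ¬ FinFar v z ∧
        Nonempty ({y // FinFar z y} ≃o {y // FinFar x₀ y})) := by
  refine ⟨?_, ?_, ?_⟩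
  · intro x hx
    obtain ⟨e₀⟩ := hx
    by_cases h : FinFar x x₀
    · have hxx1 : ¬ FinFar x x₁ := fun h2 => hne (finfar_trans (finfar_symm h) h2)
      obtain ⟨e01⟩ := htype
      obtain ⟨z, hz1, hz2, ⟨ez⟩⟩ := move_lt hs hp hhom hxx1 (e₀.trans e01)
      exact ⟨z, hz1, fun hzx => hz2 (finfar_symm hzx), ⟨ez.trans e₀⟩⟩
    · obtain ⟨z, hz1, hz2, ⟨ez⟩⟩ := move_lt hs hp hhom h e₀
      exact ⟨z, hz1, fun hzx => hz2 (finfar_symm hzx), ⟨ez.trans e₀⟩⟩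
  · intro x hx
    obtain ⟨e₀⟩ := hx
    by_cases h : FinFar x x₀
    · have hxx1 : ¬ FinFar x x₁ := fun h2 => hne (finfar_trans (finfar_symm h) h2)
      obtain ⟨e01⟩ := htype
      obtain ⟨z, hz1, hz2, ⟨ez⟩⟩ := move_gt hs hp hhom hxx1 (e₀.trans e01)
      exact ⟨z, hz1, fun hzx => hz2 (finfar_symm hzx), ⟨ez.trans e₀⟩⟩
    · obtain ⟨z, hz1, hz2, ⟨ez⟩⟩ := move_gt hs hp hhom h e₀
      exact ⟨z, hz1, fun hzx => hz2 (finfar_symm hzx), ⟨ez.trans e₀⟩⟩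
  · intro u v huv hfar h₁ h₂
    obtain ⟨w, w', hw1, hw2, ⟨ew⟩, -⟩ := h₁
    obtain ⟨w₂, w₂', h21, h22, -, ⟨e2'⟩⟩ := h₂
    obtain ⟨z, hz1, hz2, hz3, hz4, ⟨ez⟩⟩ :=
      between_aux hs hp hhom huv hfar hw1 h22 (ew.trans e2'.symm)
    exact ⟨z, hz1, hz2, hz3, hz4, ⟨ez.trans ew⟩⟩
end
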